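/- The unique critical point of the Weber function in this setting lies strictly to the left of the origin: under the stated hypotheses, every x* ∈ ℝ with W'(x*) = 0 satisfies x* < 0. -/

import Mathlib

open Filter Real

/-- The unique critical point of the Weber function in this setting lies
strictly to the left of the origin. -/
theorem weber_critical_point_negative
    (α : ℝ → ℝ) (hαc : Continuous α) (hαnonneg : ∀ x, 0 ≤ α x)
    (hαsupp : ∀ x, x ∉ Set.Ioo (-3 : ℝ) (-2) → α x = 0)
    (x₀ : ℝ) (hαpos : 0 < α x₀)
    (t : ℝ) (ht : 0 < t)
    (lam : ℝ) (hlam1 : 1 < lam) (hlam2 : lam < 2)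
    (u : ℝ → ℝ) (hu : ContDiff ℝ 2 u) (hupos : ∀ x, 0 < u x)
    (hueq : ∀ x, -deriv (deriv u) x + (x ^ 2 + t * α x) * u x = lam * u x)
    (hulim : Tendsto u (cocompact ℝ) (nhds 0))
    (W : ℝ → ℝ) (hW : ContDiff ℝ 2 W)
    (hWeq : ∀ x, deriv (deriv W) x = (x ^ 2 - lam) * W x)
    (hWu : ∀ x ≤ (-3 : ℝ), W x = u x)
    (hWpos : ∀ x ≤ (3 : ℝ), 0 < W x)
    (hWtop : Tendsto W atTop atBot) :
    ∀ xs : ℝ, deriv W xs = 0 → xs < 0 := by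
  -- regularity facts
  have regW : Continuous (deriv W) ∧ Differentiable ℝ (deriv W) ∧ Differentiable ℝ W := by
    have h2 : ContDiff ℝ ((1:ℕ∞)+1) W := by exact_mod_cast hW
    rw [contDiff_succ_iff_deriv] at h2
    exact ⟨h2.2.2.continuous, h2.2.2.differentiable (by norm_num), h2.1⟩
  obtain ⟨hW'c, hW'd, hWd⟩ := regW
  have regU : Continuous (deriv u) ∧ Differentiable ℝ (deriv u) ∧ Differentiable ℝ u := by
    have h2 : ContDiff ℝ ((1:ℕ∞)+1) u := by exact_mod_cast hu
    rw [contDiff_succ_iff_deriv] at h2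
    exact ⟨h2.2.2.continuous, h2.2.2.differentiable (by norm_num), h2.1⟩
  obtain ⟨hu'c, hu'd, hud⟩ := regU
  have hu'' : ∀ x, deriv (deriv u) x = (x ^ 2 + t * α x - lam) * u x := by
    intro x; linear_combination -hueq x
  -- the Gaussian
  set E : ℝ → ℝ := fun x => Real.exp (-(x ^ 2 / 2)) with hEdef
  have hEpos : ∀ x, 0 < E x := fun x => Real.exp_pos _
  have hEderiv : ∀ x, HasDerivAt E (-x * E x) x := by
    intro x
    have h1 : HasDerivAt (fun y : ℝ => -(y ^ 2 / 2)) (-(2 * x ^ 1 / 2)) x :=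
      ((hasDerivAt_pow 2 x).div_const 2).neg
    have h2 := h1.exp
    convert h2 using 1
    simp [hEdef]; ring
  -- the Wronskian with the Gaussian
  set P : ℝ → ℝ := fun x => W x * (-x * E x) - deriv W x * E x with hPdef
  have hPderiv : ∀ x, HasDerivAt P ((lam - 1) * (W x * E x)) x := by
    intro x
    have hdW : HasDerivAt W (deriv W x) x := hWd.differentiableAt.hasDerivAt
    have hdW' : HasDerivAt (deriv W) ((x ^ 2 - lam) * W x) x := by
      have h := hW'd.differentiableAt.hasDerivAt (x := x)
      rwa [hWeq x] at h
    have hg : HasDerivAt (fun y : ℝ => -y * E y) ((-1) * E x + (-x) * (-x * E x)) x :=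
      ((hasDerivAt_id x).neg).mul (hEderiv x)
    have h1 : HasDerivAt (fun y => W y * (-y * E y) - deriv W y * E y)
        (deriv W x * (-x * E x) + W x * ((-1) * E x + (-x) * (-x * E x))
          - ((x ^ 2 - lam) * W x * E x + deriv W x * (-x * E x))) x :=
      (hdW.mul hg).sub (hdW'.mul (hEderiv x))
    convert h1 using 1
    ring
  have hPdiff : Differentiable ℝ P := fun x => (hPderiv x).differentiableAt
  -- derivative of u is nonneg and monotone on (-∞, -3]
  have humono : MonotoneOn (deriv u) (Set.Iic (-3 : ℝ)) := by
    apply monotoneOn_of_deriv_nonneg (convex_Iic _) hu'c.continuousOn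
      (hu'd.differentiableOn)
    intro x hx
    rw [interior_Iic] at hx
    rw [hu'' x]
    have hx3 : x < -3 := hx
    have h1 : 9 ≤ x ^ 2 := by nlinarith
    have h2 : 0 ≤ t * α x := mul_nonneg ht.le (hαnonneg x)
    nlinarith [hupos x]
  have hub : Tendsto u atBot (nhds 0) := by
    refine hulim.mono_left ?_
    rw [cocompact_eq_atBot_atTop]
    exact le_sup_left
  have hu'nonneg : ∀ a ≤ (-3 : ℝ), 0 ≤ deriv u a := by
    intro a ha
    by_contra h
    push_neg at h
    have hanti : StrictAntiOn u (Set.Iic a) := by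
      apply strictAntiOn_of_deriv_neg (convex_Iic a) hud.continuous.continuousOn
      intro x hx
      rw [interior_Iic] at hx
      have hxa : x < a := hx
      exact lt_of_le_of_lt
        (humono (Set.mem_Iic.mpr (by linarith)) (Set.mem_Iic.mpr ha) hxa.le) h
    have hev : ∀ᶠ x in atBot, u x < u a := by
      have := hub.eventually (gt_mem_nhds (hupos a))
      simpa using this
    obtain ⟨x, hx1, hx2⟩ := (hev.and (eventually_le_atBot (a - 1))).exists
    have := hanti (Set.mem_Iic.mpr (by linarith : x ≤ a)) (Set.mem_Iic.mpr le_rfl)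
      (by linarith : x < a)
    linarith
  -- limits of the Gaussian pieces at -∞
  have hElim : Tendsto E atBot (nhds 0) := by
    apply Real.tendsto_exp_atBot.comp
    apply tendsto_atBot_mono' _ _ tendsto_id
    filter_upwards [eventually_le_atBot (-2 : ℝ)] with x hx
    simp only [id]
    nlinarith [mul_nonneg (by linarith : (0:ℝ) ≤ -x) (by linarith : (0:ℝ) ≤ -(x + 2))]
  have hBlim : Tendsto (fun x : ℝ => Real.exp (-x) * E x) atBot (nhds 0) := by
    have heq : (fun x : ℝ => Real.exp (-x) * E x)
        = fun x : ℝ => Real.exp (-x + -(x ^ 2 / 2)) := by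
      funext x; rw [Real.exp_add]
    rw [heq]
    apply Real.tendsto_exp_atBot.comp
    apply tendsto_atBot_mono' _ _ tendsto_id
    filter_upwards [eventually_le_atBot (-4 : ℝ)] with x hx
    simp only [id]
    nlinarith [mul_nonneg (by linarith : (0:ℝ) ≤ -x) (by linarith : (0:ℝ) ≤ -(x + 4))]
  have hxElim : Tendsto (fun x : ℝ => -x * E x) atBot (nhds 0) := by
    apply tendsto_of_tendsto_of_tendsto_of_le_of_le' tendsto_const_nhds hBlim
    · filter_upwards [eventually_le_atBot (0 : ℝ)] with x hx
      exact mul_nonneg (by linarith) (hEpos x).le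
    · filter_upwards with x
      exact mul_le_mul_of_nonneg_right
        (by linarith [Real.add_one_le_exp (-x)]) (hEpos x).le
  -- P tends to 0 at -∞
  have hPequ : P =ᶠ[atBot] fun x => u x * (-x * E x) - deriv u x * E x := by
    filter_upwards [eventually_lt_atBot (-3 : ℝ)] with x hx
    have hde : deriv W x = deriv u x := by
      apply Filter.EventuallyEq.deriv_eq
      filter_upwards [Iio_mem_nhds hx] with y hy
      exact hWu y (le_of_lt hy)
    simp only [hPdef, hWu x hx.le, hde]
  have hu'Elim : Tendsto (fun x : ℝ => deriv u x * E x) atBot (nhds 0) := by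
    have hMElim : Tendsto (fun x : ℝ => deriv u (-3) * E x) atBot (nhds 0) := by
      simpa using hElim.const_mul (deriv u (-3))
    apply tendsto_of_tendsto_of_tendsto_of_le_of_le' tendsto_const_nhds hMElim
    · filter_upwards [eventually_le_atBot (-3 : ℝ)] with x hx
      exact mul_nonneg (hu'nonneg x hx) (hEpos x).le
    · filter_upwards [eventually_le_atBot (-3 : ℝ)] with x hx
      exact mul_le_mul_of_nonneg_right
        (humono (by simpa using hx) (by simp) hx) (hEpos x).le
  have hPlim : Tendsto P atBot (nhds 0) := by
    have h1 : Tendsto (fun x : ℝ => u x * (-x * E x) - deriv u x * E x) atBot (nhds 0) := by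
      have := (hub.mul hxElim).sub hu'Elim
      simpa using this
    exact Tendsto.congr' hPequ.symm h1
  -- P is positive wherever W is positive to the left
  have hPmono : ∀ c : ℝ, (∀ y < c, 0 < W y) → MonotoneOn P (Set.Iic c) := by
    intro c hc
    apply monotoneOn_of_deriv_nonneg (convex_Iic c) hPdiff.continuous.continuousOn
      hPdiff.differentiableOn
    intro x hx
    rw [interior_Iic] at hx
    rw [(hPderiv x).deriv]
    have h1 := hc x hx
    have h2 := hEpos x
    exact le_of_lt (mul_pos (by linarith) (mul_pos h1 h2))
  have hPpos : ∀ c : ℝ, (∀ y < c, 0 < W y) → 0 < P c := by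
    intro c hc
    have h1 : 0 ≤ P (c - 1) := by
      apply le_of_tendsto hPlim
      filter_upwards [eventually_le_atBot (c - 1)] with x hx
      exact hPmono (c - 1) (fun y hy => hc y (by linarith)) (by simpa using hx)
        (by simp) hx
    have h2 : StrictMonoOn P (Set.Icc (c - 1) c) := by
      apply strictMonoOn_of_deriv_pos (convex_Icc _ _) hPdiff.continuous.continuousOn
      intro x hx
      rw [interior_Icc] at hx
      rw [(hPderiv x).deriv]
      have hw := hc x hx.2
      have hgx := hEpos x
      exact mul_pos (by linarith) (mul_pos hw hgx)
    have h3 := h2 (by constructor <;> linarith : (c - 1) ∈ Set.Icc (c-1) c)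
      (by constructor <;> linarith : c ∈ Set.Icc (c-1) c) (by linarith)
    linarith
  -- main argument
  intro xs hxs
  by_contra hcon
  push_neg at hcon
  by_cases hA : ∀ y ∈ Set.Icc (0:ℝ) xs, 0 < W y
  · -- W positive up to xs : use P xs > 0
    have hall : ∀ y < xs, 0 < W y := by
      intro y hy
      by_cases h3 : y ≤ 3
      · exact hWpos y h3
      · exact hA y ⟨by linarith, hy.le⟩
    have hp := hPpos xs hall
    have hWxs : 0 < W xs := hA xs ⟨hcon, le_rfl⟩
    have hPxs : P xs = W xs * (-xs * E xs) := by
      simp [hPdef, hxs]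
    rw [hPxs] at hp
    nlinarith [hEpos xs, mul_pos hWxs (hEpos xs)]
  · -- W vanishes somewhere in [0, xs]
    push_neg at hA
    obtain ⟨y₀, hy₀m, hy₀⟩ := hA
    have hy₀3 : 3 < y₀ := by
      by_contra h
      push_neg at h
      exact absurd (hWpos y₀ h) (not_lt.2 hy₀)
    set T : Set ℝ := Set.Icc (3:ℝ) xs ∩ {y | W y ≤ 0} with hTdef
    have hTne : T.Nonempty := ⟨y₀, ⟨hy₀3.le, hy₀m.2⟩, hy₀⟩
    have hTclosed : IsClosed T :=
      isClosed_Icc.inter (isClosed_le hWd.continuous continuous_const)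
    have hTbdd : BddBelow T := ⟨3, fun y hy => hy.1.1⟩
    set z := sInf T with hzdef
    have hzT : z ∈ T := hTclosed.csInf_mem hTne hTbdd
    have hz3 : 3 < z := by
      rcases lt_or_eq_of_le hzT.1.1 with h | h
      · exact h
      · exact absurd (hWpos z (le_of_eq h.symm)) (not_lt.2 hzT.2)
    have hzxs : z ≤ xs := hzT.1.2
    have hzlb : ∀ y < z, 0 < W y := by
      intro y hy
      by_cases h3 : y ≤ 3
      · exact hWpos y h3
      · push_neg at h3
        by_contra hWy
        push_neg at hWy
        have hyT : y ∈ T := ⟨⟨h3.le, by linarith⟩, hWy⟩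
        exact absurd (csInf_le hTbdd hyT) (not_le.2 hy)
    have hWz0 : W z = 0 := by
      refine le_antisymm hzT.2 ?_
      have htd : Tendsto W (nhdsWithin z (Set.Iio z)) (nhds (W z)) :=
        (hWd.continuous.continuousAt).continuousWithinAt
      apply ge_of_tendsto htd
      filter_upwards [self_mem_nhdsWithin] with w hw
      exact (hzlb w hw).le
    have hPz := hPpos z hzlb
    have hW'z : deriv W z < 0 := by
      have hPzeq : P z = -(deriv W z * E z) := by
        simp [hPdef, hWz0]
      rw [hPzeq] at hPz
      nlinarith [hEpos z]
    rcases eq_or_lt_of_le hzxs with heq | hlt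
    · rw [heq, hxs] at hW'z
      exact lt_irrefl 0 hW'z
    · -- continuous induction : W' stays negative past z
      set S : Set ℝ := {x | x ∈ Set.Icc z xs ∧ ∀ y ∈ Set.Icc z x, W y ≤ 0} with hSdef
      have hzS : z ∈ S := by
        refine ⟨⟨le_rfl, hzxs⟩, fun y hy => ?_⟩
        have : y = z := le_antisymm hy.2 hy.1
        rw [this, hWz0]
      have hSbdd : BddAbove S := ⟨xs, fun s hs => hs.1.2⟩
      set b := sSup S with hbdef
      have hzb : z ≤ b := le_csSup hSbdd hzS
      have hbxs : b ≤ xs := csSup_le ⟨z, hzS⟩ (fun s hs => hs.1.2)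
      have hWneg : ∀ y ∈ Set.Ico z b, W y ≤ 0 := by
        intro y hy
        obtain ⟨s, hsS, hys⟩ := exists_lt_of_lt_csSup ⟨z, hzS⟩ hy.2
        exact hsS.2 y ⟨hy.1, hys.le⟩
      have hWb : W b ≤ 0 := by
        rcases eq_or_lt_of_le hzb with h | h
        · rw [← h, hWz0]
        · have htd : Tendsto W (nhdsWithin b (Set.Iio b)) (nhds (W b)) :=
            (hWd.continuous.continuousAt).continuousWithinAt
          apply le_of_tendsto htd
          filter_upwards [Ioo_mem_nhdsLT_of_mem (⟨h, le_rfl⟩ : b ∈ Set.Ioc z b)]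
            with w hw
          exact hWneg w ⟨hw.1.le, hw.2⟩
      have hWIcc : ∀ y ∈ Set.Icc z b, W y ≤ 0 := by
        intro y hy
        rcases eq_or_lt_of_le hy.2 with h | h
        · rw [h]; exact hWb
        · exact hWneg y ⟨hy.1, h⟩
      have hanti : AntitoneOn (deriv W) (Set.Icc z b) := by
        apply antitoneOn_of_deriv_nonpos (convex_Icc _ _) hW'c.continuousOn
          hW'd.differentiableOn
        intro x hx
        rw [interior_Icc] at hx
        rw [hWeq x]
        have hWx := hWIcc x ⟨hx.1.le, hx.2.le⟩
        have hx3 : 3 < x := lt_trans hz3 hx.1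
        have h9 : 9 < x ^ 2 := by nlinarith
        nlinarith [mul_nonneg (by linarith : (0:ℝ) ≤ x ^ 2 - lam)
          (by linarith : (0:ℝ) ≤ -W x)]
      have hW'le : ∀ yy ∈ Set.Icc z b, deriv W yy ≤ deriv W z := fun yy hy =>
        hanti ⟨le_rfl, hzb⟩ hy hy.1
      rcases eq_or_lt_of_le hbxs with hbeq | hblt
      · have h := hW'le xs ⟨hzxs, le_of_eq hbeq.symm⟩
        rw [hxs] at h
        linarith
      · have hW'b : deriv W b < 0 :=
          lt_of_le_of_lt (hW'le b ⟨hzb, le_rfl⟩) hW'z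
        have hev : ∀ᶠ y in nhds b, deriv W y < 0 :=
          (hW'c.tendsto b).eventually (gt_mem_nhds hW'b)
        obtain ⟨ε, hε, hball⟩ := Metric.eventually_nhds_iff.mp hev
        set c := min (b + ε / 2) xs with hcdef
        have hbc : b < c := lt_min (by linarith) hblt
        have hcxs : c ≤ xs := min_le_right _ _
        have hSanti : StrictAntiOn W (Set.Icc b c) := by
          apply strictAntiOn_of_deriv_neg (convex_Icc _ _)
            hWd.continuous.continuousOn
          intro x hx
          rw [interior_Icc] at hx
          apply hball
          rw [Real.dist_eq, abs_lt]
          have hx2 : x < b + ε / 2 := lt_of_lt_of_le hx.2 (min_le_left _ _)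
          constructor <;> [linarith [hx.1]; linarith]
        have hnegon : ∀ y ∈ Set.Ioc b c, W y < 0 := by
          intro y hy
          have := hSanti ⟨le_rfl, hbc.le⟩ ⟨hy.1.le, hy.2⟩ hy.1
          linarith
        have hcS : c ∈ S := by
          refine ⟨⟨le_trans hzb hbc.le, hcxs⟩, fun y hy => ?_⟩
          by_cases hyb : y ≤ b
          · exact hWIcc y ⟨hy.1, hyb⟩
          · push_neg at hyb
            exact (hnegon y ⟨hyb, hy.2⟩).le
        have := le_csSup hSbdd hcS
        linarith
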